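/- arXiv:0809.2160 — 2 statements merged into one kernel-verified Lean document; each statement's English description precedes it below -/
import Mathlib

section
/- Let μ ≥ 1 and a ≥ 1 be integers and L2 a real number with L2 > a², L2 = (4μa² - 4a + 4)/(4μ - 1), and suppose (L2 - 2a)/(2(L2 - a²)) is not an integer. Then for every integer m, (L2 - a²)·m² + (2a - L2)·m + (L2·μ - 1) > 0. -/
theorem stmt_5 (μ a : ℤ) (hμ : μ ≥ 1) (ha : a ≥ 1) (L2 : ℝ) (hL2 : L2 > (a : ℝ) ^ 2)
    (hL2' : L2 = (4 * (μ : ℝ) * (a : ℝ) ^ 2 - 4 * a + 4) / (4 * μ - 1))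
    (hvertex : ¬ ∃ k : ℤ, (L2 - 2 * a) / (2 * (L2 - (a : ℝ) ^ 2)) = (k : ℝ)) :
    ∀ m : ℤ, (L2 - (a : ℝ) ^ 2) * (m : ℝ) ^ 2 + (2 * a - L2) * m + (L2 * μ - 1) > 0 := by
  intro m
  have hμ1 : (1 : ℝ) ≤ (μ : ℝ) := by exact_mod_cast hμ
  have hd : (4 : ℝ) * μ - 1 ≠ 0 := by nlinarith
  have hA : L2 - (a : ℝ) ^ 2 > 0 := by linarith
  have hL2eq : L2 * (4 * (μ : ℝ) - 1) = 4 * μ * (a : ℝ) ^ 2 - 4 * a + 4 := by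
    rw [hL2']; field_simp
  have key : 4 * (L2 - (a : ℝ) ^ 2) *
      ((L2 - (a : ℝ) ^ 2) * (m : ℝ) ^ 2 + (2 * a - L2) * m + (L2 * μ - 1)) =
      (2 * (L2 - (a : ℝ) ^ 2) * m + (2 * a - L2)) ^ 2 := by
    linear_combination L2 * hL2eq
  have hne : 2 * (L2 - (a : ℝ) ^ 2) * (m : ℝ) + (2 * a - L2) ≠ 0 := by
    intro h
    apply hvertex
    refine ⟨m, ?_⟩
    rw [div_eq_iff (by positivity)]
    linarith
  have hsq : (2 * (L2 - (a : ℝ) ^ 2) * m + (2 * a - L2)) ^ 2 > 0 := by positivity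
  nlinarith
end

section
/- Let m ≥ 2 and μ ≥ 2 be integers, ε ≥ 0 and L2 > 0 real numbers with ε < √(1 - 1/(4μ))·√L2. If an integer CL satisfies CL = m·ε (the Seshadri curve relation C·L = m·ε(L;1)) and (m(m-1) + μ)·L2 ≤ (CL)², then we reach a contradiction; i.e., there is no real m ≥ 2 with (m(m-1) + μ)·L2 ≤ m²·ε². -/
theorem stmt_17 (μ : ℤ) (hμ : μ ≥ 2) (ε L2 : ℝ) (hε : ε ≥ 0) (hL2 : L2 > 0)
    (hbound : ε < Real.sqrt (1 - 1 / (4 * (μ : ℝ))) * Real.sqrt L2) :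
    ∀ m : ℝ, m ≥ 2 → ¬ ((m * (m - 1) + (μ : ℝ)) * L2 ≤ m ^ 2 * ε ^ 2) := by
  intro m hm h
  have hμr : (2:ℝ) ≤ (μ:ℝ) := by exact_mod_cast hμ
  have hμpos : (0:ℝ) < (μ:ℝ) := by linarith
  have ha : (0:ℝ) ≤ 1 - 1 / (4 * (μ:ℝ)) := by
    have : 1 / (4 * (μ:ℝ)) ≤ 1 / 8 := by
      apply one_div_le_one_div_of_le <;> linarith
    linarith
  have hsq : ε ^ 2 < (1 - 1 / (4 * (μ:ℝ))) * L2 := by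
    have h1 : ε ^ 2 < (Real.sqrt (1 - 1 / (4 * (μ:ℝ))) * Real.sqrt L2) ^ 2 := by
      have hnn : 0 ≤ Real.sqrt (1 - 1 / (4 * (μ:ℝ))) * Real.sqrt L2 :=
        mul_nonneg (Real.sqrt_nonneg _) (Real.sqrt_nonneg _)
      nlinarith
    calc ε ^ 2 < (Real.sqrt (1 - 1 / (4 * (μ:ℝ))) * Real.sqrt L2) ^ 2 := h1
      _ = (1 - 1 / (4 * (μ:ℝ))) * L2 := by
          rw [mul_pow, Real.sq_sqrt ha, Real.sq_sqrt hL2.le]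
  -- key: m^2 * (1 - 1/(4μ)) ≤ m*(m-1) + μ since (m - 2μ)^2 ≥ 0
  have hkey : m ^ 2 * (1 - 1 / (4 * (μ:ℝ))) ≤ m * (m - 1) + (μ:ℝ) := by
    have h4 : (0:ℝ) < 4 * (μ:ℝ) := by linarith
    have hinv : 1 / (4 * (μ:ℝ)) * (4 * (μ:ℝ)) = 1 := by field_simp
    nlinarith [sq_nonneg (m - 2 * (μ:ℝ)), mul_pos h4 hμpos]
  have hm2 : (0:ℝ) < m ^ 2 := by positivity
  nlinarith [mul_lt_mul_of_pos_left hsq hm2]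
end
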